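/- arXiv:1803.10590 — 2 statements merged into one kernel-verified Lean document; each statement's English description precedes it below -/
import Mathlib

section
/- Let X have the logistic distribution with mean μ and scale s > 0. Then E[(max(0, X))²] = −2s²·Li₂(−e^{μ/s}), where Li₂(z) = Σ_{k≥1} z^k/k² is the dilogarithm (real-valued for z ∈ [−1, 0]). -/
open MeasureTheory

/-- Pdf of the logistic distribution with location `m` and scale `s`. -/
noncomputable def logisticPdf (m s x : ℝ) : ℝ :=
  Real.exp (-(x - m) / s) / (s * (1 + Real.exp (-(x - m) / s)) ^ 2)

/-- The dilogarithm on the real line, via its integral representation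
Li₂(z) = −∫₀^z log(1−t)/t dt. -/
noncomputable def dilog (z : ℝ) : ℝ := -∫ t in (0 : ℝ)..z, Real.log (1 - t) / t

section Helpers
open Filter

lemma abs_logdiv_le {t : ℝ} (ht : t ≤ 0) : |Real.log (1 - t) / t| ≤ 1 := by
  rcases eq_or_lt_of_le ht with h | h
  · simp [h]
  · have h1 : (0:ℝ) ≤ Real.log (1 - t) := Real.log_nonneg (by linarith)
    have h2 : Real.log (1 - t) ≤ -t := by
      have := Real.log_le_sub_one_of_pos (show (0:ℝ) < 1 - t by linarith)
      linarith
    rw [abs_div, abs_of_nonneg h1, abs_of_neg h, div_le_one (by linarith)]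
    exact h2

lemma logdiv_measurable : Measurable (fun t : ℝ => Real.log (1 - t) / t) :=
  (Real.measurable_log.comp (measurable_const.sub measurable_id)).div measurable_id

lemma logdiv_intervalIntegrable {z : ℝ} (hz : z ≤ 0) :
    IntervalIntegrable (fun t => Real.log (1 - t) / t) volume 0 z := by
  rw [intervalIntegrable_iff]
  refine Measure.integrableOn_of_bounded (M := 1) ?_ logdiv_measurable.aestronglyMeasurable ?_
  · rw [Set.uIoc]; exact measure_Ioc_lt_top.ne
  · rw [ae_restrict_iff' measurableSet_uIoc]
    refine MeasureTheory.ae_of_all _ fun t ht => ?_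
    rw [Real.norm_eq_abs]
    refine abs_logdiv_le ?_
    rcases Set.mem_uIoc.mp ht with h | h
    · linarith [h.1, h.2]
    · exact h.2

lemma dilog_hasDerivAt {z : ℝ} (hz : z < 0) :
    HasDerivAt dilog (-(Real.log (1 - z) / z)) z := by
  have hint := logdiv_intervalIntegrable hz.le
  have hcont : ContinuousAt (fun t : ℝ => Real.log (1 - t) / t) z := by
    have h1 : ContinuousAt (fun t : ℝ => Real.log (1 - t)) z :=
      (Real.continuousAt_log (by linarith)).comp (continuousAt_const.sub continuousAt_id)
    exact h1.div continuousAt_id hz.ne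
  exact (intervalIntegral.integral_hasDerivAt_right hint
    (logdiv_measurable.stronglyMeasurable.stronglyMeasurableAtFilter) hcont).neg

lemma abs_dilog_le {z : ℝ} (hz : z ≤ 0) : |dilog z| ≤ -z := by
  have h := intervalIntegral.norm_integral_le_of_norm_le_const (C := 1)
    (f := fun t : ℝ => Real.log (1 - t) / t) (a := (0:ℝ)) (b := z) ?_
  · rw [dilog, abs_neg]
    calc |∫ t in (0:ℝ)..z, Real.log (1 - t) / t| ≤ 1 * |z - 0| := h
    _ = -z := by rw [one_mul, sub_zero, abs_of_nonpos hz]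
  · intro t ht
    rw [Real.norm_eq_abs]
    refine abs_logdiv_le ?_
    rcases Set.mem_uIoc.mp ht with h' | h'
    · linarith [h'.1, h'.2]
    · exact h'.2

lemma hasDerivAt_G (μ s : ℝ) (hs : 0 < s) (x : ℝ) :
    HasDerivAt (fun x => -(x ^ 2 * Real.exp (-(x - μ) / s) / (1 + Real.exp (-(x - μ) / s)))
      - 2 * s * x * Real.log (1 + Real.exp (-(x - μ) / s))
      + 2 * s ^ 2 * dilog (-Real.exp (-(x - μ) / s)))
      (x ^ 2 * logisticPdf μ s x) x := by
  have hsne : s ≠ 0 := ne_of_gt hs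
  have hEpos : (0:ℝ) < Real.exp (-(x - μ) / s) := Real.exp_pos _
  have h1E : (0:ℝ) < 1 + Real.exp (-(x - μ) / s) := by linarith
  have hEd : HasDerivAt (fun x : ℝ => Real.exp (-(x - μ) / s))
      (Real.exp (-(x - μ) / s) * (-1 / s)) x := by
    have h0 : HasDerivAt (fun x : ℝ => -(x - μ) / s) (-1 / s) x := by
      simpa using (((hasDerivAt_id x).sub_const μ).neg.div_const s)
    exact h0.exp
  have hA := ((hasDerivAt_pow 2 x).mul hEd).div (hEd.const_add 1) (ne_of_gt h1E)
  have hlog := (hEd.const_add 1).log (ne_of_gt h1E)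
  have hB := ((hasDerivAt_id x).const_mul (2 * s)).mul hlog
  have hdil := (dilog_hasDerivAt (show -Real.exp (-(x - μ) / s) < 0 by linarith)).comp x hEd.neg
  have hC := hdil.const_mul (2 * s ^ 2)
  have hGd := (hA.neg.sub hB).add hC
  refine hGd.congr_deriv ?_
  rw [logisticPdf]
  simp only [Function.comp_def, sub_neg_eq_add, Nat.cast_ofNat, pow_one, mul_one, Pi.mul_apply, id]
  field_simp
  ring

lemma tendsto_pow_mul_E (μ s : ℝ) (hs : 0 < s) (n : ℕ) :
    Tendsto (fun x : ℝ => x ^ n * Real.exp (-(x - μ) / s)) atTop (nhds 0) := by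
  have h := tendsto_rpow_mul_exp_neg_mul_atTop_nhds_zero (n : ℝ) (1 / s) (by positivity)
  have h2 := h.const_mul (Real.exp (μ / s))
  rw [mul_zero] at h2
  refine h2.congr fun x => ?_
  rw [Real.rpow_natCast]
  rw [show Real.exp (μ / s) * (x ^ n * Real.exp (-(1 / s) * x))
      = x ^ n * (Real.exp (μ / s) * Real.exp (-(1 / s) * x)) by ring, ← Real.exp_add]
  congr 2
  field_simp
  ring

lemma tendsto_G (μ s : ℝ) (hs : 0 < s) :
    Tendsto (fun x => -(x ^ 2 * Real.exp (-(x - μ) / s) / (1 + Real.exp (-(x - μ) / s)))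
      - 2 * s * x * Real.log (1 + Real.exp (-(x - μ) / s))
      + 2 * s ^ 2 * dilog (-Real.exp (-(x - μ) / s))) atTop (nhds 0) := by
  have hE : ∀ x : ℝ, (0:ℝ) < Real.exp (-(x - μ) / s) := fun x => Real.exp_pos _
  have h0 := tendsto_pow_mul_E μ s hs 0
  simp only [pow_zero, one_mul] at h0
  have h1' := tendsto_pow_mul_E μ s hs 1
  simp only [pow_one] at h1'
  have h2' := tendsto_pow_mul_E μ s hs 2
  have t1 : Tendsto (fun x : ℝ =>
      -(x ^ 2 * Real.exp (-(x - μ) / s) / (1 + Real.exp (-(x - μ) / s)))) atTop (nhds 0) := by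
    refine squeeze_zero_norm' ?_ h2'
    filter_upwards [eventually_ge_atTop (0:ℝ)] with x hx
    rw [norm_neg, Real.norm_eq_abs, abs_of_nonneg (by positivity)]
    rw [div_le_iff₀ (by linarith [hE x])]
    nlinarith [hE x, sq_nonneg x, mul_nonneg (mul_nonneg (sq_nonneg x) (hE x).le) (hE x).le]
  have t2 : Tendsto (fun x : ℝ =>
      2 * s * x * Real.log (1 + Real.exp (-(x - μ) / s))) atTop (nhds 0) := by
    have h := h1'.const_mul (2 * s)
    rw [mul_zero] at h
    refine squeeze_zero_norm' ?_ h
    filter_upwards [eventually_ge_atTop (0:ℝ)] with x hx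
    have hlogpos : (0:ℝ) ≤ Real.log (1 + Real.exp (-(x - μ) / s)) :=
      Real.log_nonneg (by linarith [hE x])
    have hloge : Real.log (1 + Real.exp (-(x - μ) / s)) ≤ Real.exp (-(x - μ) / s) := by
      have := Real.log_le_sub_one_of_pos
        (show (0:ℝ) < 1 + Real.exp (-(x - μ) / s) by linarith [hE x])
      linarith
    rw [Real.norm_eq_abs, abs_of_nonneg (by positivity)]
    have := mul_le_mul_of_nonneg_left hloge (show (0:ℝ) ≤ 2 * s * x by positivity)
    linarith
  have t3 : Tendsto (fun x : ℝ =>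
      2 * s ^ 2 * dilog (-Real.exp (-(x - μ) / s))) atTop (nhds 0) := by
    have h := h0.const_mul (2 * s ^ 2)
    rw [mul_zero] at h
    refine squeeze_zero_norm' ?_ h
    filter_upwards with x
    have hd := abs_dilog_le (show -Real.exp (-(x - μ) / s) ≤ 0 by linarith [hE x])
    rw [neg_neg] at hd
    rw [Real.norm_eq_abs, abs_mul]
    have habs : |(2:ℝ) * s ^ 2| = 2 * s ^ 2 := abs_of_nonneg (by positivity)
    rw [habs]
    have h2s : (0:ℝ) ≤ 2 * s ^ 2 := by positivity
    nlinarith [abs_nonneg (dilog (-Real.exp (-(x - μ) / s)))]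
  have := (t1.sub t2).add t3
  simpa using this

end Helpers

/-- For X logistic with mean μ and scale s: E[(max(0, X))²] = −2s²·Li₂(−e^{μ/s}). -/
theorem relu_secondMoment_logistic (μ s : ℝ) (hs : 0 < s) :
    (∫ x, (max 0 x) ^ 2 * logisticPdf μ s x)
      = -2 * s ^ 2 * dilog (-Real.exp (μ / s)) := by
  have hind : (fun x : ℝ => (max 0 x) ^ 2 * logisticPdf μ s x)
      = Set.indicator (Set.Ioi 0) (fun x => x ^ 2 * logisticPdf μ s x) := by
    funext x
    by_cases hx : (0:ℝ) < x
    · simp [Set.indicator_apply, Set.mem_Ioi, hx, max_eq_right hx.le]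
    · simp [Set.indicator_apply, Set.mem_Ioi, hx, max_eq_left (not_lt.mp hx)]
  rw [hind, integral_indicator measurableSet_Ioi]
  have key := integral_Ioi_of_hasDerivAt_of_nonneg (a := 0)
    (g := fun x => -(x ^ 2 * Real.exp (-(x - μ) / s) / (1 + Real.exp (-(x - μ) / s)))
      - 2 * s * x * Real.log (1 + Real.exp (-(x - μ) / s))
      + 2 * s ^ 2 * dilog (-Real.exp (-(x - μ) / s)))
    (g' := fun x => x ^ 2 * logisticPdf μ s x) (l := 0)
    ((hasDerivAt_G μ s hs 0).continuousAt.continuousWithinAt)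
    (fun x _ => hasDerivAt_G μ s hs x)
    (fun x _ => by
      have : (0:ℝ) < logisticPdf μ s x := by
        rw [logisticPdf]
        have h1 : (0:ℝ) < 1 + Real.exp (-(x - μ) / s) := by linarith [Real.exp_pos (-(x - μ) / s)]
        positivity
      positivity)
    (tendsto_G μ s hs)
  rw [key]
  norm_num
end

section
/- Let V₁,...,Vₙ be i.i.d. exponential(1) random variables and define Z_i = log(Vₙ) − log(V_i) for i = 1,...,n−1. Then Z = (Z₁,...,Z_{n−1}) has the (n−1)-variate logistic distribution with joint cdf F(z) = 1/(1 + Σ_{k=1}^{n−1} e^{−z_k}). -/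
open MeasureTheory ProbabilityTheory

section Aux

open Set Real

/-- The exponential(1) measure of `Iic c`. -/
lemma expMeasure_Iic (c : ℝ) :
    expMeasure 1 (Set.Iic c)
      = ENNReal.ofReal (if 0 ≤ c then 1 - Real.exp (-c) else 0) := by
  have hd : expMeasure 1 = volume.withDensity (exponentialPDF 1) := rfl
  rw [hd, withDensity_apply _ measurableSet_Iic,
    lintegral_exponentialPDF_eq_antiDeriv one_pos c]
  simp [one_mul]

lemma expMeasure_singleton (c : ℝ) : expMeasure 1 {c} = 0 := by
  have hd : expMeasure 1 = volume.withDensity (exponentialPDF 1) := rfl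
  rw [hd, withDensity_apply _ (measurableSet_singleton c)]
  exact setLIntegral_measure_zero _ _ (Real.volume_singleton)

lemma expMeasure_Iio (c : ℝ) : expMeasure 1 (Set.Iio c) = expMeasure 1 (Set.Iic c) := by
  refine le_antisymm (measure_mono Set.Iio_subset_Iic_self) ?_
  calc expMeasure 1 (Set.Iic c) = expMeasure 1 (Set.Iio c ∪ {c}) := by
        rw [Set.Iio_union_right]
    _ ≤ expMeasure 1 (Set.Iio c) + expMeasure 1 {c} := measure_union_le _ _
    _ = expMeasure 1 (Set.Iio c) := by rw [expMeasure_singleton, add_zero]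

lemma expMeasure_Ici {c : ℝ} (hc : 0 ≤ c) :
    expMeasure 1 (Set.Ici c) = ENNReal.ofReal (Real.exp (-c)) := by
  haveI : IsProbabilityMeasure (expMeasure 1) := isProbabilityMeasure_expMeasure one_pos
  have h1 : (0:ℝ) ≤ 1 - Real.exp (-c) := by
    have := Real.exp_le_one_iff.2 (neg_nonpos.2 hc)
    linarith
  rw [← Set.compl_Iio, measure_compl measurableSet_Iio (measure_ne_top _ _),
    expMeasure_Iio, expMeasure_Iic, if_pos hc, measure_univ, ← ENNReal.ofReal_one,
    ← ENNReal.ofReal_sub _ h1]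
  norm_num

end Aux

/-- If V₁, …, Vₙ are i.i.d. Exp(1) and Z_i = log Vₙ − log V_i for i < n, then
Z has the (n−1)-variate logistic distribution with joint cdf
F(z) = 1/(1 + Σ_k e^{−z_k}). -/
theorem log_ratio_exponentials_multivariate_logistic
    {Ω : Type*} [MeasurableSpace Ω] (μ : Measure Ω) [IsProbabilityMeasure μ]
    (n : ℕ) (V : Fin (n + 1) → Ω → ℝ) (hV : ∀ i, Measurable (V i))
    (hindep : iIndepFun (m := fun _ => Real.measurableSpace) V μ)
    (hcdf : ∀ i, ∀ s : ℝ, (μ {ω | V i ω ≤ s}).toReal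
      = if 0 ≤ s then 1 - Real.exp (-s) else 0) :
    ∀ z : Fin n → ℝ,
      (μ {ω | ∀ i : Fin n,
          Real.log (V (Fin.last n) ω) - Real.log (V i.castSucc ω) ≤ z i}).toReal
        = (1 + ∑ i : Fin n, Real.exp (-z i))⁻¹ := by
  intro z
  classical
  set ν : Measure ℝ := expMeasure 1 with hν
  haveI : IsProbabilityMeasure ν := isProbabilityMeasure_expMeasure one_pos
  set q : Fin n → ℝ := fun i => Real.exp (-z i) with hqdef
  have hq : ∀ i, 0 < q i := fun i => Real.exp_pos _
  set r : ℝ := 1 + ∑ i, q i with hrdef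
  have hr : 0 < r := by
    have : (0:ℝ) ≤ ∑ i, q i := Finset.sum_nonneg fun i _ => (hq i).le
    rw [hrdef]; linarith
  -- marginals
  have hmap : ∀ i, μ.map (V i) = ν := by
    intro i
    refine Measure.ext_of_Iic _ _ (fun s => ?_)
    rw [Measure.map_apply (hV i) measurableSet_Iic]
    have : V i ⁻¹' Set.Iic s = {ω | V i ω ≤ s} := rfl
    rw [this, ← ENNReal.ofReal_toReal (measure_ne_top μ _), hcdf i s, hν, expMeasure_Iic]
  -- joint law is the product measure
  set T : Ω → (Fin (n + 1) → ℝ) := fun ω i => V i ω with hTdef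
  have hT : Measurable T := measurable_pi_lambda _ hV
  have hpi : Measure.pi (fun _ : Fin (n + 1) => ν) = μ.map T := by
    refine Measure.pi_eq fun s hs => ?_
    rw [Measure.map_apply hT (MeasurableSet.univ_pi hs)]
    have hpre : T ⁻¹' Set.pi Set.univ s = ⋂ i, V i ⁻¹' s i := by
      ext ω; simp [Set.mem_pi, hTdef]
    rw [hpre]
    have := hindep.measure_inter_preimage_eq_mul Finset.univ (sets := s)
      (fun i _ => hs i)
    simp only [Finset.mem_univ, Set.iInter_true, Set.iInter_iInter_eq_left] at this
    rw [this]
    refine Finset.prod_congr rfl fun i _ => ?_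
    rw [← hmap i, Measure.map_apply (hV i) (hs i)]
  -- the event as a set in the product space
  set S : Set (Fin (n + 1) → ℝ) :=
    {x | ∀ i : Fin n, Real.log (x (Fin.last n)) - Real.log (x i.castSucc) ≤ z i} with hSdef
  have hSmeas : MeasurableSet S := by
    rw [hSdef, Set.setOf_forall]
    exact MeasurableSet.iInter fun i =>
      measurableSet_le ((Real.measurable_log.comp (measurable_pi_apply _)).sub
        (Real.measurable_log.comp (measurable_pi_apply _))) measurable_const
  set S' : Set (Fin (n + 1) → ℝ) :=
    {x | (0 < x (Fin.last n) ∧ ∀ j : Fin n, 0 < x j.castSucc) ∧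
      ∀ i : Fin n, x (Fin.last n) ≤ x i.castSucc * Real.exp (z i)} with hS'def
  -- a.e. all coordinates are positive
  have hIic0 : ν (Set.Iic (0:ℝ)) = 0 := by
    rw [hν, expMeasure_Iic]; simp
  have hpos : ∀ᵐ x ∂(Measure.pi fun _ : Fin (n + 1) => ν), ∀ j, 0 < x j := by
    rw [ae_iff]
    have hsub : {x : Fin (n + 1) → ℝ | ¬ ∀ j, 0 < x j}
        ⊆ ⋃ j, Function.eval j ⁻¹' Set.Iic (0:ℝ) := by
      intro x hx
      push_neg at hx
      obtain ⟨j, hj⟩ := hx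
      exact Set.mem_iUnion.2 ⟨j, hj⟩
    exact measure_mono_null hsub
      (measure_iUnion_null fun j => Measure.pi_eval_preimage_null _ hIic0)
  have hkey : ∀ a b zz : ℝ, 0 < a → 0 < b →
      (Real.log a - Real.log b ≤ zz ↔ a ≤ b * Real.exp zz) := by
    intro a b zz ha hb
    rw [sub_le_iff_le_add, Real.log_le_iff_le_exp ha, Real.exp_add, Real.exp_log hb,
      mul_comm]
  have hae : S =ᵐ[Measure.pi fun _ : Fin (n + 1) => ν] S' := by
    filter_upwards [hpos] with x hx
    have hl : 0 < x (Fin.last n) := hx _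
    refine eq_iff_iff.2 ?_
    constructor
    · intro h
      exact ⟨⟨hl, fun j => hx _⟩, fun i => (hkey _ _ _ hl (hx _)).1 (h i)⟩
    · rintro ⟨-, h⟩ i
      exact (hkey _ _ _ hl (hx _)).2 (h i)
  -- move to ℝ × (Fin n → ℝ)
  set T' : Set (ℝ × (Fin n → ℝ)) :=
    {p | (0 < p.1 ∧ ∀ j, 0 < p.2 j) ∧ ∀ i, p.1 ≤ p.2 i * Real.exp (z i)} with hT'def
  have hT'meas : MeasurableSet T' := by
    rw [hT'def]
    simp only [Set.setOf_and, Set.setOf_forall]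
    refine MeasurableSet.inter (MeasurableSet.inter ?_ ?_) ?_
    · exact measurableSet_lt measurable_const measurable_fst
    · have hm2 : ∀ j : Fin n, Measurable fun p : ℝ × (Fin n → ℝ) => p.2 j :=
        fun j => (measurable_pi_apply j).comp measurable_snd
      exact MeasurableSet.iInter fun j => measurableSet_lt measurable_const (hm2 j)
    · have hm2 : ∀ j : Fin n, Measurable fun p : ℝ × (Fin n → ℝ) => p.2 j :=
        fun j => (measurable_pi_apply j).comp measurable_snd
      exact MeasurableSet.iInter fun i =>
        measurableSet_le measurable_fst ((hm2 i).mul_const _)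
  have hmp := measurePreserving_piFinSuccAbove (fun _ : Fin (n + 1) => ν) (Fin.last n)
  have hpre : (MeasurableEquiv.piFinSuccAbove (fun _ : Fin (n + 1) => ℝ) (Fin.last n))
      ⁻¹' T' = S' := by
    ext x
    simp [hT'def, hS'def, MeasurableEquiv.piFinSuccAbove, Fin.removeNth,
      Fin.succAbove_last, Fin.init]
  -- the inner measure
  set g : ℝ → ENNReal := fun t =>
    if 0 < t then ∏ i, ENNReal.ofReal (Real.exp (-(t * q i))) else 0 with hgdef
  have hinner : ∀ t : ℝ,
      (Measure.pi fun _ : Fin n => ν)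
        {y : Fin n → ℝ | (0 < t ∧ ∀ j, 0 < y j) ∧ ∀ i, t ≤ y i * Real.exp (z i)}
      = g t := by
    intro t
    simp only [hgdef]
    by_cases ht : 0 < t
    · rw [if_pos ht]
      have hset : {y : Fin n → ℝ | (0 < t ∧ ∀ j, 0 < y j) ∧ ∀ i, t ≤ y i * Real.exp (z i)}
          = Set.pi Set.univ fun i => Set.Ici (t * q i) := by
        ext y
        simp only [Set.mem_setOf_eq, Set.mem_pi, Set.mem_univ, Set.mem_Ici, true_implies]
        constructor
        · rintro ⟨-, h⟩ i
          show t * Real.exp (-z i) ≤ y i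
          rw [Real.exp_neg, ← div_eq_mul_inv, div_le_iff₀ (Real.exp_pos _)]
          exact h i
        · intro h
          have hy : ∀ j, 0 < y j := fun j =>
            lt_of_lt_of_le (mul_pos ht (hq j)) (h j)
          refine ⟨⟨ht, hy⟩, fun i => ?_⟩
          have h2 : t * Real.exp (-z i) ≤ y i := h i
          rwa [Real.exp_neg, ← div_eq_mul_inv, div_le_iff₀ (Real.exp_pos _)] at h2
      rw [hset, Measure.pi_pi]
      refine Finset.prod_congr rfl fun i _ => ?_
      exact expMeasure_Ici (mul_nonneg ht.le (hq i).le)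
    · rw [if_neg ht]
      have hemp : {y : Fin n → ℝ | (0 < t ∧ ∀ j, 0 < y j) ∧ ∀ i, t ≤ y i * Real.exp (z i)}
          = (∅ : Set (Fin n → ℝ)) := by
        ext y
        simp only [Set.mem_setOf_eq, Set.mem_empty_iff_false, iff_false]
        rintro ⟨⟨h, -⟩, -⟩
        exact ht h
      rw [hemp, measure_empty]
  have hgmeas : Measurable g := by
    simp only [hgdef]
    refine Measurable.ite (measurableSet_lt measurable_const measurable_id) ?_ measurable_const
    exact Finset.measurable_prod _ fun i _ =>
      (Real.measurable_exp.comp (measurable_id.mul_const (q i)).neg).ennreal_ofReal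
  -- putting it together
  have hE : μ {ω | ∀ i : Fin n,
      Real.log (V (Fin.last n) ω) - Real.log (V i.castSucc ω) ≤ z i}
      = ENNReal.ofReal r⁻¹ := by
    have h1 : μ {ω | ∀ i : Fin n,
        Real.log (V (Fin.last n) ω) - Real.log (V i.castSucc ω) ≤ z i}
        = (μ.map T) S := by
      rw [Measure.map_apply hT hSmeas]
      rfl
    rw [h1, ← hpi, measure_congr hae, ← hpre,
      hmp.measure_preimage hT'meas.nullMeasurableSet]
    rw [Measure.prod_apply hT'meas]
    have h2 : ∀ t : ℝ, (Prod.mk t ⁻¹' T')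
        = {y : Fin n → ℝ | (0 < t ∧ ∀ j, 0 < y j) ∧ ∀ i, t ≤ y i * Real.exp (z i)} := by
      intro t; rfl
    calc ∫⁻ t, (Measure.pi fun _ : Fin n => ν) (Prod.mk t ⁻¹' T') ∂ν
        = ∫⁻ t, g t ∂ν := by
          refine lintegral_congr fun t => ?_
          rw [h2 t, hinner t]
      _ = ∫⁻ t, (exponentialPDF 1 * g) t := by
          rw [hν]
          exact lintegral_withDensity_eq_lintegral_mul volume
            (measurable_exponentialPDFReal 1).ennreal_ofReal hgmeas
      _ = ∫⁻ t, ENNReal.ofReal r⁻¹ * exponentialPDF r t := by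
          refine lintegral_congr_ae ?_
          have h0 : ∀ᵐ (t : ℝ) ∂volume, t ≠ 0 := by
            rw [ae_iff]
            simp only [ne_eq, not_not, Set.setOf_eq_eq_singleton]
            exact Real.volume_singleton
          filter_upwards [h0] with t ht
          rcases lt_or_gt_of_ne ht with hneg | htpos
          · simp [Pi.mul_apply, exponentialPDF_of_neg hneg, hgdef, not_lt.2 hneg.le,
              asymm hneg]
          · simp only [Pi.mul_apply, hgdef, if_pos htpos,
              exponentialPDF_of_nonneg htpos.le]
            rw [← ENNReal.ofReal_prod_of_nonneg (fun i _ => (Real.exp_pos _).le),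
              ← ENNReal.ofReal_mul (by positivity),
              ← ENNReal.ofReal_mul (by positivity)]
            congr 1
            rw [← Real.exp_sum]
            have hsum : ∑ i, -(t * q i) = -(t * ∑ i, q i) := by
              rw [Finset.mul_sum, ← Finset.sum_neg_distrib]
            rw [hsum, one_mul, one_mul, ← Real.exp_add, ← mul_assoc,
              inv_mul_cancel₀ hr.ne', one_mul]
            congr 1
            rw [hrdef]; ring
      _ = ENNReal.ofReal r⁻¹ := by
          have hpdf : Measurable (exponentialPDF r) :=
            (measurable_exponentialPDFReal r).ennreal_ofReal
          rw [lintegral_const_mul _ hpdf,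
            lintegral_exponentialPDF_eq_one hr, mul_one]
  rw [hE, ENNReal.toReal_ofReal (inv_nonneg.2 hr.le), hrdef]
end
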